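/- Let d ≥ 1, let x : Fin (d+4) → EuclideanSpace ℝ (Fin (d+1)) be injective with affineSpan ℝ (Set.range x) = ⊤, set P := convexHull ℝ (Set.range x), assume every x i is an extreme point of P, and assume P is simplicial: every proper face of P (a set F with IsExtreme ℝ P F and F ≠ P) equals convexHull ℝ (x '' S) for some finset S of Fin (d+4) for which the family of points (x i)_{i ∈ S} is affinely independent. Let y : Fin (d+4) → EuclideanSpace ℝ (Fin 2) be a Gale transform of x and let ŷ be the corresponding Gale diagram. Then ŷ i ≠ 0 for every i, and ŷ i ≠ -ŷ j for all i ≠ j (no two points of the Gale diagram are zero or lie at antipodal points of the unit circle). -/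

import Mathlib

open scoped Classical

/-- `y` is a Gale transform of `x`: the linear evaluation map
`α ↦ (⟪α, y i⟫)ᵢ` is injective and its range is the space of affine dependences
`K(x) = {λ | ∑ λ i • x i = 0 ∧ ∑ λ i = 0}`. -/
def IsGaleTransform {n d e : ℕ} (x : Fin n → EuclideanSpace ℝ (Fin d))
    (y : Fin n → EuclideanSpace ℝ (Fin e)) : Prop :=
  Function.Injective
    (fun (α : EuclideanSpace ℝ (Fin e)) (i : Fin n) => (inner ℝ α (y i) : ℝ)) ∧
  Set.range (fun (α : EuclideanSpace ℝ (Fin e)) (i : Fin n) => (inner ℝ α (y i) : ℝ)) =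
    {l : Fin n → ℝ | ∑ i, l i • x i = 0 ∧ ∑ i, l i = 0}

/-- The Gale diagram associated to a Gale transform `y`: each nonzero `y i` is
normalized to the unit sphere, and zero vectors are kept at the origin. -/
noncomputable def galeDiagram {n e : ℕ} (y : Fin n → EuclideanSpace ℝ (Fin e)) :
    Fin n → EuclideanSpace ℝ (Fin e) :=
  fun i => if y i = 0 then 0 else ‖y i‖⁻¹ • y i

private lemma gale_functional {d : ℕ}
    (x : Fin (d + 4) → EuclideanSpace ℝ (Fin (d + 1)))
    (hx : affineSpan ℝ (Set.range x) = ⊤)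
    (y : Fin (d + 4) → EuclideanSpace ℝ (Fin 2))
    (hy : IsGaleTransform x y)
    (v : Fin (d + 4) → ℝ) (hvy : ∑ k, v k • y k = 0) :
    ∃ (w : EuclideanSpace ℝ (Fin (d + 1))) (c : ℝ),
      ∀ k, (inner ℝ w (x k) : ℝ) + c = v k := by
  classical
  let G : EuclideanSpace ℝ (Fin 2) →ₗ[ℝ] (Fin (d + 4) → ℝ) :=
    { toFun := fun α k => inner ℝ α (y k)
      map_add' := fun a b => funext fun k => inner_add_left a b (y k)
      map_smul' := fun c a => funext fun k => real_inner_smul_left a (y k) c }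
  let Φ : (EuclideanSpace ℝ (Fin (d + 1)) × ℝ) →ₗ[ℝ] (Fin (d + 4) → ℝ) :=
    { toFun := fun wc k => inner ℝ wc.1 (x k) + wc.2
      map_add' := by
        intro a b; funext k
        simp only [Prod.fst_add, Prod.snd_add, inner_add_left, Pi.add_apply]
        ring
      map_smul' := by
        intro c a; funext k
        simp only [Prod.smul_fst, Prod.smul_snd, real_inner_smul_left, RingHom.id_apply,
          Pi.smul_apply, smul_eq_mul]
        ring }
  have hK : ∀ l : Fin (d + 4) → ℝ,
      l ∈ LinearMap.range G ↔ (∑ k, l k • x k = 0 ∧ ∑ k, l k = 0) := by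
    intro l
    constructor
    · rintro ⟨α, rfl⟩
      have : (fun k => (inner ℝ α (y k) : ℝ)) ∈
          {l : Fin (d + 4) → ℝ | ∑ i, l i • x i = 0 ∧ ∑ i, l i = 0} := by
        rw [← hy.2]; exact ⟨α, rfl⟩
      exact this
    · intro hl
      have : l ∈ Set.range (fun (α : EuclideanSpace ℝ (Fin 2)) (i : Fin (d + 4)) =>
          (inner ℝ α (y i) : ℝ)) := by rw [hy.2]; exact hl
      obtain ⟨α, hα⟩ := this
      exact ⟨α, hα⟩
  have horth : ∀ (wc : EuclideanSpace ℝ (Fin (d + 1)) × ℝ) (l : Fin (d + 4) → ℝ),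
      (∑ k, l k • x k = 0) → (∑ k, l k = 0) → ∑ k, l k * Φ wc k = 0 := by
    rintro ⟨w, c⟩ l hl1 hl2
    have h1 : ∑ k, l k * ((inner ℝ w (x k) : ℝ) + c)
        = (inner ℝ w (∑ k, l k • x k) : ℝ) + (∑ k, l k) * c := by
      rw [inner_sum, Finset.sum_mul, ← Finset.sum_add_distrib]
      refine Finset.sum_congr rfl fun k _ => ?_
      rw [real_inner_smul_right]; ring
    show ∑ k, l k * ((inner ℝ w (x k) : ℝ) + c) = 0
    simpa [hl1, hl2] using h1
  have hinjΦ : Function.Injective Φ := by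
    rw [← LinearMap.ker_eq_bot]
    rw [Submodule.eq_bot_iff]
    rintro ⟨w, c⟩ hwc
    have hwc' : ∀ k, (inner ℝ w (x k) : ℝ) + c = 0 := fun k => congrFun hwc k
    have hvs : vectorSpan ℝ (Set.range x) = ⊤ := by
      rw [← direction_affineSpan, hx]; exact AffineSubspace.direction_top ℝ _ _
    let L : EuclideanSpace ℝ (Fin (d + 1)) →ₗ[ℝ] ℝ :=
      { toFun := fun z => inner ℝ w z
        map_add' := fun a b => inner_add_right w a b
        map_smul' := fun r a => real_inner_smul_right w a r }
    have hle : vectorSpan ℝ (Set.range x) ≤ LinearMap.ker L := by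
      rw [vectorSpan_def, Submodule.span_le]
      rintro z ⟨p, hp, q, hq, rfl⟩
      obtain ⟨kp, rfl⟩ := hp
      obtain ⟨kq, rfl⟩ := hq
      have : (inner ℝ w (x kp - x kq) : ℝ) = 0 := by
        rw [inner_sub_right]
        have e1 := hwc' kp; have e2 := hwc' kq
        linarith
      simpa [L, vsub_eq_sub] using this
    have hw0 : w = 0 := by
      have : w ∈ LinearMap.ker L := hle (hvs ▸ Submodule.mem_top)
      have : (inner ℝ w w : ℝ) = 0 := this
      exact inner_self_eq_zero.mp this
    have hc0 : c = 0 := by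
      have := hwc' 0
      rw [hw0] at this
      simpa using this
    simp [Prod.ext_iff, hw0, hc0]
  have hinjG : Function.Injective G := hy.1
  have hdisj : LinearMap.range Φ ⊓ LinearMap.range G = ⊥ := by
    rw [eq_bot_iff]
    rintro u ⟨⟨wc, rfl⟩, hu2⟩
    obtain ⟨h1, h2⟩ := (hK _).mp hu2
    have hsq : ∑ k, Φ wc k * Φ wc k = 0 := horth wc _ h1 h2
    have : ∀ k ∈ Finset.univ, Φ wc k * Φ wc k = 0 := by
      rw [← Finset.sum_eq_zero_iff_of_nonneg fun k _ => mul_self_nonneg _]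
      exact hsq
    have : Φ wc = 0 := funext fun k => mul_self_eq_zero.mp (this k (Finset.mem_univ k))
    simp [this]
  have hfr1 : Module.finrank ℝ (LinearMap.range Φ) = d + 2 := by
    rw [LinearMap.finrank_range_of_inj hinjΦ]
    simp [finrank_euclideanSpace_fin]
  have hfr2 : Module.finrank ℝ (LinearMap.range G) = 2 := by
    rw [LinearMap.finrank_range_of_inj hinjG, finrank_euclideanSpace_fin]
  have htop : LinearMap.range Φ ⊔ LinearMap.range G = ⊤ := by
    apply Submodule.eq_top_of_finrank_eq
    have hh := Submodule.finrank_sup_add_finrank_inf_eq (LinearMap.range Φ) (LinearMap.range G)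
    rw [hdisj] at hh
    simp only [finrank_bot, add_zero] at hh
    rw [hh, hfr1, hfr2]
    simp [Module.finrank_pi]
  have hv : v ∈ LinearMap.range Φ := by
    have hmem : v ∈ LinearMap.range Φ ⊔ LinearMap.range G := htop ▸ Submodule.mem_top
    obtain ⟨u, hu, l, hl, rfl⟩ := Submodule.mem_sup.mp hmem
    obtain ⟨α, rfl⟩ := hl
    have hA : ∑ k, (u + G α) k * G α k = 0 := by
      have : ∑ k, (u + G α) k * G α k = (inner ℝ α (∑ k, (u + G α) k • y k) : ℝ) := by
        rw [inner_sum]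
        refine Finset.sum_congr rfl fun k _ => ?_
        rw [real_inner_smul_right]; rfl
      rw [this, hvy, inner_zero_right]
    have hB : ∑ k, G α k * u k = 0 := by
      obtain ⟨wc, rfl⟩ := hu
      obtain ⟨h1, h2⟩ := (hK (G α)).mp ⟨α, rfl⟩
      exact horth wc _ h1 h2
    have hC : ∑ k, G α k * G α k = 0 := by
      have : ∑ k, G α k * G α k = (∑ k, (u + G α) k * G α k) - ∑ k, G α k * u k := by
        rw [← Finset.sum_sub_distrib]
        refine Finset.sum_congr rfl fun k _ => ?_
        simp only [Pi.add_apply]; ring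
      rw [this, hA, hB, sub_zero]
    have hl0 : G α = 0 := by
      have hz : ∀ k ∈ Finset.univ, G α k * G α k = 0 := by
        rw [← Finset.sum_eq_zero_iff_of_nonneg fun k _ => mul_self_nonneg _]
        exact hC
      exact funext fun k => mul_self_eq_zero.mp (hz k (Finset.mem_univ k))
    rw [hl0, add_zero]
    exact hu
  obtain ⟨⟨w, c⟩, hwc⟩ := hv
  exact ⟨w, c, fun k => congrFun hwc k⟩

private lemma gale_face {d : ℕ}
    (x : Fin (d + 4) → EuclideanSpace ℝ (Fin (d + 1)))
    (hx : affineSpan ℝ (Set.range x) = ⊤)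
    (y : Fin (d + 4) → EuclideanSpace ℝ (Fin 2))
    (hy : IsGaleTransform x y)
    (v : Fin (d + 4) → ℝ) (hv0 : ∀ k, 0 ≤ v k) (hvy : ∑ k, v k • y k = 0) :
    IsExtreme ℝ (convexHull ℝ (Set.range x)) (convexHull ℝ (x '' {k | v k = 0})) := by
  classical
  obtain ⟨w, c, hwc⟩ := gale_functional x hx y hy v hvy
  have hlin : IsLinearMap ℝ (fun p : EuclideanSpace ℝ (Fin (d + 1)) => (inner ℝ w p : ℝ)) :=
    ⟨fun a b => inner_add_right w a b, fun r a => real_inner_smul_right w a r⟩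
  -- nonnegativity on P
  have hgP : ∀ p ∈ convexHull ℝ (Set.range x), 0 ≤ (inner ℝ w p : ℝ) + c := by
    intro p hp
    have hsub : convexHull ℝ (Set.range x) ⊆
        {p : EuclideanSpace ℝ (Fin (d + 1)) | -c ≤ (inner ℝ w p : ℝ)} := by
      apply convexHull_min
      · rintro _ ⟨k, rfl⟩
        have := hwc k
        have := hv0 k
        simp only [Set.mem_setOf_eq]
        linarith [hwc k, hv0 k]
      · exact convex_halfSpace_ge hlin (-c)
    have := hsub hp
    simp only [Set.mem_setOf_eq] at this
    linarith
  -- vanishing on F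
  have hgF : ∀ p ∈ convexHull ℝ (x '' {k | v k = 0}), (inner ℝ w p : ℝ) + c = 0 := by
    intro p hp
    have hsub : convexHull ℝ (x '' {k | v k = 0}) ⊆
        {p : EuclideanSpace ℝ (Fin (d + 1)) | (inner ℝ w p : ℝ) = -c} := by
      apply convexHull_min
      · rintro _ ⟨k, hk, rfl⟩
        have h1 := hwc k
        simp only [Set.mem_setOf_eq] at hk ⊢
        rw [hk] at h1
        linarith
      · exact convex_hyperplane hlin (-c)
    have := hsub hp
    simp only [Set.mem_setOf_eq] at this
    linarith
  -- points of P where the functional vanishes are in F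
  have hPF : ∀ p ∈ convexHull ℝ (Set.range x), (inner ℝ w p : ℝ) + c = 0 →
      p ∈ convexHull ℝ (x '' {k | v k = 0}) := by
    intro p hp hgp
    rw [convexHull_range_eq_exists_affineCombination] at hp
    obtain ⟨s, wt, hwt0, hwt1, rfl⟩ := hp
    rw [Finset.affineCombination_eq_linear_combination _ _ _ hwt1] at hgp ⊢
    have hval : (inner ℝ w (∑ i ∈ s, wt i • x i) : ℝ) + c = ∑ i ∈ s, wt i * v i := by
      rw [inner_sum]
      have : ∀ i ∈ s, (inner ℝ w (wt i • x i) : ℝ) = wt i * v i - wt i * c := by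
        intro i _
        rw [real_inner_smul_right, show (inner ℝ w (x i) : ℝ) = v i - c from by linarith [hwc i]]
        ring
      rw [Finset.sum_congr rfl this, Finset.sum_sub_distrib, ← Finset.sum_mul, hwt1]
      ring
    have hzero : ∑ i ∈ s, wt i * v i = 0 := by rw [← hval, hgp]
    have hterm : ∀ i ∈ s, wt i * v i = 0 := by
      rw [← Finset.sum_eq_zero_iff_of_nonneg fun i hi => mul_nonneg (hwt0 i hi) (hv0 i)]
      exact hzero
    set t := s.filter fun i => wt i ≠ 0 with ht
    have hts : ∑ i ∈ t, wt i = 1 := by rw [ht, Finset.sum_filter_ne_zero, hwt1]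
    have hsum_t : ∑ i ∈ t, wt i • x i = ∑ i ∈ s, wt i • x i := by
      rw [ht]
      apply Finset.sum_filter_of_ne
      intro i _ h hwti
      exact h (by rw [hwti, zero_smul])
    have htv : ∀ i ∈ t, x i ∈ x '' {k | v k = 0} := by
      intro i hi
      rw [ht, Finset.mem_filter] at hi
      have := hterm i hi.1
      have hv : v i = 0 := by
        rcases mul_eq_zero.mp this with h | h
        · exact absurd h hi.2
        · exact h
      exact ⟨i, hv, rfl⟩
    have := Finset.centerMass_mem_convexHull t
      (fun i hi => hwt0 i (Finset.filter_subset _ _ hi))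
      (by rw [hts]; norm_num) htv
    rwa [Finset.centerMass_eq_of_sum_1 _ _ hts, hsum_t] at this
  constructor
  · exact convexHull_mono (Set.image_subset_range x _)
  · intro x1 hx1 x2 hx2 z hz hseg
    obtain ⟨a, b, ha, hb, hab, habz⟩ := hseg
    have g1 := hgP x1 hx1
    have g2 := hgP x2 hx2
    have gz := hgF z hz
    have hcomb : a * ((inner ℝ w x1 : ℝ) + c) + b * ((inner ℝ w x2 : ℝ) + c) = 0 := by
      rw [← habz] at gz
      rw [inner_add_right, real_inner_smul_right, real_inner_smul_right] at gz
      linear_combination gz + c * hab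
    have e1 : (inner ℝ w x1 : ℝ) + c = 0 := by nlinarith
    have e2 : (inner ℝ w x2 : ℝ) + c = 0 := by nlinarith
    exact hPF x1 hx1 e1

theorem stmt14 {d : ℕ} (hd : 1 ≤ d)
    (x : Fin (d + 4) → EuclideanSpace ℝ (Fin (d + 1)))
    (hinj : Function.Injective x)
    (hx : affineSpan ℝ (Set.range x) = ⊤)
    (hext : ∀ i, x i ∈ Set.extremePoints ℝ (convexHull ℝ (Set.range x)))
    (hsimp : ∀ F : Set (EuclideanSpace ℝ (Fin (d + 1))),
      IsExtreme ℝ (convexHull ℝ (Set.range x)) F → F ≠ convexHull ℝ (Set.range x) →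
      ∃ S : Finset (Fin (d + 4)),
        AffineIndependent ℝ (fun i : ↥S => x i) ∧ F = convexHull ℝ (x '' ↑S))
    (y : Fin (d + 4) → EuclideanSpace ℝ (Fin 2))
    (hy : IsGaleTransform x y) :
    (∀ i, galeDiagram y i ≠ 0) ∧
    (∀ i j, i ≠ j → galeDiagram y i ≠ -galeDiagram y j) := by
  classical
  have hxP : ∀ k, x k ∈ convexHull ℝ (Set.range x) :=
    fun k => subset_convexHull ℝ _ ⟨k, rfl⟩
  have hface_mem : ∀ (S : Set (Fin (d + 4))) (k : Fin (d + 4)),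
      x k ∈ convexHull ℝ (x '' S) → k ∈ S := by
    intro S k hk
    have h2 : convexHull ℝ (x '' S) ⊆ convexHull ℝ (Set.range x) :=
      convexHull_mono (Set.image_subset_range x S)
    have h3 : x k ∈ (convexHull ℝ (x '' S)).extremePoints ℝ :=
      inter_extremePoints_subset_extremePoints_of_subset h2 ⟨hk, hext k⟩
    obtain ⟨k', hk', hk'eq⟩ := extremePoints_convexHull_subset h3
    exact (hinj hk'eq) ▸ hk'
  -- No y i is zero.
  have key1 : ∀ i, y i ≠ 0 := by
    intro i hyi
    set v : Fin (d + 4) → ℝ := fun k => if k = i then 1 else 0 with hv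
    have hv0 : ∀ k, 0 ≤ v k := by
      intro k; by_cases h : k = i <;> simp [hv, h]
    have hvy : ∑ k, v k • y k = 0 := by
      rw [Finset.sum_eq_single i]
      · simp [hv, hyi]
      · intro b _ hb; simp [hv, hb]
      · intro h; exact absurd (Finset.mem_univ i) h
    have hFext := gale_face x hx y hy v hv0 hvy
    have hFne : convexHull ℝ (x '' {k | v k = 0}) ≠ convexHull ℝ (Set.range x) := by
      intro hFP
      have hmem : x i ∈ convexHull ℝ (x '' {k | v k = 0}) := hFP ▸ hxP i
      have hiS := hface_mem _ _ hmem
      simp [hv] at hiS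
    obtain ⟨S', haff, hFS'⟩ := hsimp _ hFext hFne
    have hsub : ∀ k, k ≠ i → k ∈ S' := by
      intro k hk
      have hxk : x k ∈ convexHull ℝ (x '' {k | v k = 0}) :=
        subset_convexHull ℝ _ ⟨k, by simp [hv, hk], rfl⟩
      rw [hFS'] at hxk
      exact hface_mem (↑S') k hxk
    have hcard : (Finset.univ.erase i) ⊆ S' :=
      fun k hk => hsub k (Finset.ne_of_mem_erase hk)
    have hc1 : d + 3 ≤ S'.card := by
      have := Finset.card_le_card hcard
      rw [Finset.card_erase_of_mem (Finset.mem_univ i), Finset.card_univ,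
        Fintype.card_fin] at this
      omega
    have hc2 := haff.card_le_finrank_succ
    rw [Fintype.card_coe] at hc2
    have hr : Module.finrank ℝ (vectorSpan ℝ (Set.range fun i : ↥S' => x ↑i)) ≤ d + 1 := by
      have h := Submodule.finrank_le (vectorSpan ℝ (Set.range fun i : ↥S' => x ↑i))
      rwa [finrank_euclideanSpace_fin] at h
    omega
  have hgd : ∀ i, galeDiagram y i = ‖y i‖⁻¹ • y i := by
    intro i; rw [galeDiagram, if_neg (key1 i)]
  refine ⟨?_, ?_⟩
  · intro i
    rw [hgd i]
    exact smul_ne_zero (inv_ne_zero (norm_ne_zero_iff.mpr (key1 i))) (key1 i)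
  · intro i j hij h
    rw [hgd i, hgd j] at h
    have hyi := key1 i
    have hyj := key1 j
    set v : Fin (d + 4) → ℝ :=
      fun k => if k = i then ‖y i‖⁻¹ else if k = j then ‖y j‖⁻¹ else 0 with hv
    have hv0 : ∀ k, 0 ≤ v k := by
      intro k
      show 0 ≤ if k = i then ‖y i‖⁻¹ else if k = j then ‖y j‖⁻¹ else 0
      split_ifs <;> positivity
    have hvy : ∑ k, v k • y k = 0 := by
      have hsum : ∑ k, v k • y k = ∑ k ∈ ({i, j} : Finset (Fin (d + 4))), v k • y k := by
        refine (Finset.sum_subset (Finset.subset_univ _) ?_).symm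
        intro k _ hk
        simp only [Finset.mem_insert, Finset.mem_singleton, not_or] at hk
        simp [hv, hk.1, hk.2]
      rw [hsum, Finset.sum_pair hij]
      have hvi : v i = ‖y i‖⁻¹ := by simp [hv]
      have hvj : v j = ‖y j‖⁻¹ := by simp [hv, Ne.symm hij]
      rw [hvi, hvj, h]
      simp
    have hFext := gale_face x hx y hy v hv0 hvy
    have hvine : v i ≠ 0 := by
      simp only [hv, if_pos rfl]
      exact inv_ne_zero (norm_ne_zero_iff.mpr hyi)
    have hFne : convexHull ℝ (x '' {k | v k = 0}) ≠ convexHull ℝ (Set.range x) := by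
      intro hFP
      have hmem : x i ∈ convexHull ℝ (x '' {k | v k = 0}) := hFP ▸ hxP i
      exact hvine (hface_mem _ _ hmem)
    obtain ⟨S', haff, hFS'⟩ := hsimp _ hFext hFne
    have hsub : ∀ k, k ≠ i → k ≠ j → k ∈ S' := by
      intro k hk1 hk2
      have hxk : x k ∈ convexHull ℝ (x '' {k | v k = 0}) :=
        subset_convexHull ℝ _ ⟨k, by simp [hv, hk1, hk2], rfl⟩
      rw [hFS'] at hxk
      exact hface_mem (↑S') k hxk
    -- construct a nonzero dependence supported away from i and j
    set α : EuclideanSpace ℝ (Fin 2) := WithLp.toLp 2 (fun t : Fin 2 => if t = 0 then -(y i 1) else (y i 0)) with hα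
    have hαyi : (inner ℝ α (y i) : ℝ) = 0 := by
      simp only [PiLp.inner_apply, RCLike.inner_apply, starRingEnd_apply, star_trivial,
        Fin.sum_univ_two]
      simp [hα]
      ring
    have hα0 : α ≠ 0 := by
      intro h0
      apply hyi
      have h00 : y i 0 = 0 := by
        have := congrArg (fun z : EuclideanSpace ℝ (Fin 2) => z 1) h0
        simpa [hα] using this
      have h01 : y i 1 = 0 := by
        have := congrArg (fun z : EuclideanSpace ℝ (Fin 2) => z 0) h0
        simpa [hα] using this
      ext t
      fin_cases t
      · exact h00
      · exact h01
    have hαyj : (inner ℝ α (y j) : ℝ) = 0 := by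
      have h' : ‖y j‖⁻¹ • y j = -(‖y i‖⁻¹ • y i) := by
        rw [h, neg_neg]
      have hyj' : y j = ‖y j‖ • (-(‖y i‖⁻¹ • y i)) := by
        rw [← h', smul_smul, mul_inv_cancel₀ (norm_ne_zero_iff.mpr hyj), one_smul]
      rw [hyj', inner_smul_right, inner_neg_right, inner_smul_right]
      rw [hαyi]
      simp
    set l : Fin (d + 4) → ℝ := fun k => (inner ℝ α (y k) : ℝ) with hl
    have hlK : l ∈ {l : Fin (d + 4) → ℝ | ∑ k, l k • x k = 0 ∧ ∑ k, l k = 0} := by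
      rw [← hy.2]
      exact ⟨α, rfl⟩
    obtain ⟨hl1, hl2⟩ := hlK
    have hlne : l ≠ 0 := by
      intro h0
      apply hα0
      apply hy.1
      funext k
      show (inner ℝ α (y k) : ℝ) = (inner ℝ (0 : EuclideanSpace ℝ (Fin 2)) (y k) : ℝ)
      rw [inner_zero_left]
      exact congrFun h0 k
    have hout : ∀ k, k ∉ S' → l k = 0 := by
      intro k hk
      by_cases h1 : k = i
      · rw [h1]; exact hαyi
      · by_cases h2 : k = j
        · rw [h2]; exact hαyj
        · exact absurd (hsub k h1 h2) hk
    have hs1 : ∑ k ∈ S', l k = 0 :=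
      (Finset.sum_subset (Finset.subset_univ S') fun k _ hk => hout k hk).trans hl2
    have hs2 : ∑ k ∈ S', l k • x k = 0 :=
      (Finset.sum_subset (Finset.subset_univ S') fun k _ hk => by
        rw [hout k hk, zero_smul]).trans hl1
    have hzero := affineIndependent_iff.mp haff Finset.univ (fun k : ↥S' => l ↑k)
      (by rw [Finset.sum_coe_sort S' l]; exact hs1)
      (by rw [Finset.sum_coe_sort S' (fun k => l k • x k)]; exact hs2)
    apply hlne
    funext k
    by_cases hk : k ∈ S'
    · exact hzero ⟨k, hk⟩ (Finset.mem_univ _)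
    · exact hout k hk
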